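/- arXiv:1902.00107 — 4 statements merged into one kernel-verified Lean document; each statement's English description precedes it below -/
import Mathlib

section
/- Let Z be hypergeometrically distributed with parameters n, m, r. Then for every natural number z with z ≥ r/2, P(Z = z) ≤ (4m/n)^z. -/
lemma hyp_aux1 (n m : ℕ) (hmn : m ≤ n) : ∀ z : ℕ, z ≤ m →
    n ^ z * m.descFactorial z ≤ m ^ z * n.descFactorial z := by
  intro z
  induction z with
  | zero => simp
  | succ z ih =>
    intro hz
    have hz' : z ≤ m := by omega
    have hzn : z ≤ n := le_trans hz' hmn
    have hstep : n * (m - z) ≤ m * (n - z) := by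
      zify [hz', hzn]
      nlinarith [Nat.zero_le z, hmn]
    rw [Nat.descFactorial_succ, Nat.descFactorial_succ, pow_succ, pow_succ]
    calc n ^ z * n * ((m - z) * m.descFactorial z)
        = (n * (m - z)) * (n ^ z * m.descFactorial z) := by ring
      _ ≤ (m * (n - z)) * (m ^ z * n.descFactorial z) :=
          Nat.mul_le_mul hstep (ih hz')
      _ = m ^ z * m * ((n - z) * n.descFactorial z) := by ring

lemma hyp_aux2 (n m r z : ℕ) (hmn : m ≤ n) (hzm : z ≤ m) (hzr : z ≤ r) :
    n ^ z * (m.choose z * (n - m).choose (r - z)) ≤ m ^ z * (r.choose z * n.choose r) := by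
  have h1 := hyp_aux1 n m hmn z hzm
  have h2 : (n - m).descFactorial (r - z) ≤ (n - z).descFactorial (r - z) :=
    Nat.descFactorial_le _ (by omega)
  have h3 : (n - z).descFactorial (r - z) * n.descFactorial z = n.descFactorial r :=
    Nat.descFactorial_mul_descFactorial hzr
  have key : n ^ z * m.descFactorial z * (n - m).descFactorial (r - z)
      ≤ m ^ z * n.descFactorial r := by
    calc n ^ z * m.descFactorial z * (n - m).descFactorial (r - z)
        ≤ m ^ z * n.descFactorial z * (n - z).descFactorial (r - z) :=
          Nat.mul_le_mul h1 h2
      _ = m ^ z * n.descFactorial r := by rw [← h3]; ring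
  rw [Nat.descFactorial_eq_factorial_mul_choose, Nat.descFactorial_eq_factorial_mul_choose,
    Nat.descFactorial_eq_factorial_mul_choose] at key
  have hf : Nat.factorial r = r.choose z * Nat.factorial z * Nat.factorial (r - z) :=
    (Nat.choose_mul_factorial_mul_factorial hzr).symm
  rw [hf] at key
  have hpos : 0 < Nat.factorial z * Nat.factorial (r - z) := Nat.mul_pos (Nat.factorial_pos _) (Nat.factorial_pos _)
  refine Nat.le_of_mul_le_mul_left ?_ hpos
  calc Nat.factorial z * Nat.factorial (r - z) * (n ^ z * (m.choose z * (n - m).choose (r - z)))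
      = n ^ z * (Nat.factorial z * m.choose z) * (Nat.factorial (r - z) * (n - m).choose (r - z)) := by ring
    _ ≤ m ^ z * (r.choose z * Nat.factorial z * Nat.factorial (r - z) * n.choose r) := key
    _ = Nat.factorial z * Nat.factorial (r - z) * (m ^ z * (r.choose z * n.choose r)) := by ring

/-- Tail inequality for hypergeometric variables (second form): if `P` is the
probability mass function of the hypergeometric distribution with parameters
`n`, `m`, `r`, then for every `z ≥ r/2` we have `P(Z = z) ≤ (4m/n)^z`. -/
theorem hypergeometric_pmf_le_four (n m r : ℕ) (hn : 0 < n) (hmn : m ≤ n) (hrn : r ≤ n)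
    (P : ℕ → ℝ)
    (hP : ∀ z : ℕ, P z =
      if z ≤ m ∧ z ≤ r then
        (Nat.choose m z * Nat.choose (n - m) (r - z) : ℝ) / Nat.choose n r
      else 0) :
    ∀ z : ℕ, r ≤ 2 * z → P z ≤ (4 * (m : ℝ) / n) ^ z := by
  intro z hz
  rw [hP z]
  split_ifs with h
  · obtain ⟨hzm, hzr⟩ := h
    have hcn : (0:ℝ) < n.choose r := by exact_mod_cast Nat.choose_pos hrn
    have hnz : (0:ℝ) < (n:ℝ) ^ z := by positivity
    have h2r : r.choose z ≤ 4 ^ z := by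
      calc r.choose z ≤ ∑ i ∈ Finset.range (r + 1), r.choose i :=
            Finset.single_le_sum (fun i _ => Nat.zero_le _)
              (Finset.mem_range.mpr (by omega))
        _ = 2 ^ r := Nat.sum_range_choose r
        _ ≤ 2 ^ (2 * z) := Nat.pow_le_pow_right (by norm_num) hz
        _ = 4 ^ z := by rw [pow_mul]; norm_num
    have key2 : n ^ z * (m.choose z * (n - m).choose (r - z)) ≤ (4 * m) ^ z * n.choose r := by
      calc n ^ z * (m.choose z * (n - m).choose (r - z))
          ≤ m ^ z * (r.choose z * n.choose r) := hyp_aux2 n m r z hmn hzm hzr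
        _ ≤ m ^ z * (4 ^ z * n.choose r) :=
            Nat.mul_le_mul_left _ (Nat.mul_le_mul_right _ h2r)
        _ = (4 * m) ^ z * n.choose r := by rw [mul_pow]; ring
    have key2' : ((n:ℝ) ^ z * (m.choose z * (n - m).choose (r - z)))
        ≤ (4 * (m:ℝ)) ^ z * n.choose r := by exact_mod_cast key2
    rw [div_le_iff₀ hcn, div_pow, div_mul_eq_mul_div, le_div_iff₀ hnz]
    calc (m.choose z * (n - m).choose (r - z) : ℝ) * (n:ℝ) ^ z
        = (n:ℝ) ^ z * (m.choose z * (n - m).choose (r - z)) := by ring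
      _ ≤ (4 * (m:ℝ)) ^ z * n.choose r := key2'
  · positivity
end

section
/- Let Z be hypergeometric with parameters n, m, r and let Δ := max{2Z − r + s − m, 0} where s ≤ m ≤ n/8 are natural numbers and 1 ≤ r ≤ n. Then for every positive integer z, P(Δ = z) ≤ (1/2)^{z/2}. -/
open MeasureTheory

lemma choose_le_two_pow' (r k : ℕ) : r.choose k ≤ 2 ^ r := by
  rcases le_or_gt k r with h | h
  · calc r.choose k ≤ ∑ i ∈ Finset.range (r+1), r.choose i :=
        Finset.single_le_sum (fun i _ => Nat.zero_le _) (Finset.mem_range.2 (Nat.lt_succ_of_le h))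
    _ = 2 ^ r := Nat.sum_range_choose r
  · simp [Nat.choose_eq_zero_of_lt h]

lemma descFactorial_add' (n a b : ℕ) :
    n.descFactorial (a + b) = n.descFactorial a * (n - a).descFactorial b := by
  induction b with
  | zero => simp
  | succ b ih =>
    rw [← Nat.add_assoc, Nat.descFactorial_succ, ih, Nat.descFactorial_succ]
    have : n - (a + b) = n - a - b := by omega
    rw [this]; ring

lemma pow_mul_descFactorial_le (n m k : ℕ) (hmn : m ≤ n) :
    n ^ k * m.descFactorial k ≤ m ^ k * n.descFactorial k := by
  induction k with
  | zero => simp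
  | succ k ih =>
    rw [Nat.descFactorial_succ, Nat.descFactorial_succ, pow_succ, pow_succ]
    have h1 : n * (m - k) ≤ m * (n - k) := by
      rcases le_or_gt k m with h | h
      · calc n * (m - k) = n * m - n * k := by rw [Nat.mul_sub]
        _ ≤ m * n - m * k := by
            rw [Nat.mul_comm n m]; exact Nat.sub_le_sub_left (Nat.mul_le_mul_right k hmn) _
        _ = m * (n - k) := by rw [Nat.mul_sub]
      · simp [Nat.sub_eq_zero_of_le h.le]
    calc n ^ k * n * ((m - k) * m.descFactorial k)
        = (n * (m - k)) * (n ^ k * m.descFactorial k) := by ring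
      _ ≤ (m * (n - k)) * (m ^ k * n.descFactorial k) := Nat.mul_le_mul h1 ih
      _ = m ^ k * m * ((n - k) * n.descFactorial k) := by ring

open Nat in
lemma key_ineq (n m r k : ℕ) (h8 : 8 * m ≤ n) (hkr : k ≤ r) (hrn : r ≤ n) (hkm : k ≤ m)
    (hr2k : r ≤ 2 * k) :
    2 ^ k * (m.choose k * (n - m).choose (r - k)) ≤ n.choose r := by
  rcases Nat.eq_zero_or_pos n with rfl | hn
  · have : m = 0 ∧ r = 0 ∧ k = 0 := by omega
    obtain ⟨rfl, rfl, rfl⟩ := this; simp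
  have hd1 : m.descFactorial k = k ! * m.choose k :=
    Nat.descFactorial_eq_factorial_mul_choose _ _
  have hd2 : (n - m).descFactorial (r - k) = (r - k)! * (n - m).choose (r - k) :=
    Nat.descFactorial_eq_factorial_mul_choose _ _
  have hfac : r.choose k * k ! * (r - k)! = r ! := Nat.choose_mul_factorial_mul_factorial hkr
  have hnr : n.descFactorial r = r ! * n.choose r :=
    Nat.descFactorial_eq_factorial_mul_choose _ _
  have hsplit : n.descFactorial r = n.descFactorial k * (n - k).descFactorial (r - k) := by
    rw [← descFactorial_add']; congr 1; omega
  have main : (r ! * n ^ k) * (2 ^ k * (m.choose k * (n - m).choose (r - k)))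
      ≤ (r ! * n ^ k) * n.choose r := by
    calc (r ! * n ^ k) * (2 ^ k * (m.choose k * (n - m).choose (r - k)))
        = 2 ^ k * r.choose k * ((n ^ k * m.descFactorial k) * (n - m).descFactorial (r - k)) := by
          rw [hd1, hd2, ← hfac]; ring
      _ ≤ 2 ^ k * 2 ^ r * ((m ^ k * n.descFactorial k) * (n - k).descFactorial (r - k)) := by
          refine Nat.mul_le_mul (Nat.mul_le_mul_left _ (choose_le_two_pow' r k)) ?_
          exact Nat.mul_le_mul (pow_mul_descFactorial_le n m k (by omega))
            (Nat.descFactorial_le _ (by omega))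
      _ = (2 ^ k * 2 ^ r * m ^ k) * n.descFactorial r := by rw [hsplit]; ring
      _ ≤ n ^ k * n.descFactorial r := by
          refine Nat.mul_le_mul_right _ ?_
          calc 2 ^ k * 2 ^ r * m ^ k
              ≤ 2 ^ k * 2 ^ (2 * k) * m ^ k :=
                Nat.mul_le_mul_right _
                  (Nat.mul_le_mul_left _ (Nat.pow_le_pow_right (by norm_num) hr2k))
            _ = (8 * m) ^ k := by
                rw [mul_pow, ← pow_add, show (8:ℕ) = 2 ^ 3 from rfl, ← pow_mul]
                congr 2; omega
            _ ≤ n ^ k := Nat.pow_le_pow_left h8 k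
      _ = (r ! * n ^ k) * n.choose r := by rw [hnr]; ring
  have hpos : 0 < r ! * n ^ k := by positivity
  exact Nat.le_of_mul_le_mul_left main hpos


/-- Lemma 5 (progress bound): let `Z` be hypergeometric with parameters `n`, `m`, `r`
and `Δ := max{2Z − r + s − m, 0}` where `s ≤ m ≤ n/8` and `1 ≤ r ≤ n`. Then for every
`z ≥ 1`, `P(Δ = z) ≤ (1/2)^{z/2}`. -/
theorem progress_prob_le {Ω : Type*} [MeasurableSpace Ω]
    (μ : Measure Ω) [IsProbabilityMeasure μ]
    (n m r s : ℕ) (hsm : s ≤ m) (hm : 8 * m ≤ n) (hr1 : 1 ≤ r) (hrn : r ≤ n)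
    (Z : Ω → ℕ) (hZmeas : Measurable Z)
    (hZ : ∀ z : ℕ, (μ {ω | Z ω = z}).toReal =
      if z ≤ m ∧ z ≤ r then
        (Nat.choose m z * Nat.choose (n - m) (r - z) : ℝ) / Nat.choose n r
      else 0) :
    ∀ z : ℕ, 1 ≤ z →
      (μ {ω | max (2 * (Z ω : ℤ) - r + s - m) 0 = z}).toReal
        ≤ ((1 : ℝ) / 2) ^ ((z : ℝ) / 2) := by
  intro z hz
  set t := z + r + m - s with htdef
  have hset : {ω | max (2 * (Z ω : ℤ) - r + s - m) 0 = z} = {ω | 2 * Z ω = t} := by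
    ext ω
    simp only [Set.mem_setOf_eq]
    constructor
    · intro h
      have h' : 2 * (Z ω : ℤ) - r + s - m = z := by
        rcases max_cases (2 * (Z ω : ℤ) - ↑r + ↑s - ↑m) 0 with ⟨h1, h2⟩ | ⟨h1, h2⟩ <;> omega
      omega
    · intro h
      have h' : 2 * (Z ω : ℤ) - r + s - m = z := by omega
      rw [h']
      exact max_eq_left (by positivity)
  rw [hset]
  rcases Nat.even_or_odd t with he | ho
  · obtain ⟨k, hk⟩ : ∃ k, t = 2 * k := ⟨t / 2, by obtain ⟨c, hc⟩ := he; omega⟩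
    have hsetk : {ω | 2 * Z ω = t} = {ω | Z ω = k} := by
      ext ω; simp only [Set.mem_setOf_eq]; omega
    rw [hsetk, hZ k]
    split_ifs with h
    · have hr2k : r ≤ 2 * k := by omega
      have hkey := key_ineq n m r k hm h.2 hrn h.1 hr2k
      have hC : 0 < (n.choose r : ℝ) := by exact_mod_cast Nat.choose_pos hrn
      have h2 : (2 : ℝ) ^ k * ((m.choose k : ℝ) * ((n - m).choose (r - k) : ℝ))
          ≤ (n.choose r : ℝ) := by exact_mod_cast hkey
      have step1 : ((m.choose k : ℝ) * ((n - m).choose (r - k) : ℝ)) / (n.choose r : ℝ)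
          ≤ ((1 : ℝ) / 2) ^ k := by
        rw [div_le_iff₀ hC]
        have heq : ((1 : ℝ) / 2) ^ k * (n.choose r : ℝ) = (n.choose r : ℝ) / 2 ^ k := by
          rw [one_div, inv_pow]; ring
        rw [heq, le_div_iff₀ (by positivity)]
        linarith [h2]
      have step2 : ((1 : ℝ) / 2) ^ k ≤ ((1 : ℝ) / 2) ^ ((z : ℝ) / 2) := by
        rw [← Real.rpow_natCast ((1 : ℝ) / 2) k]
        apply Real.rpow_le_rpow_of_exponent_ge (by norm_num) (by norm_num)
        have hzk : z ≤ 2 * k := by omega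
        have : (z : ℝ) ≤ 2 * k := by exact_mod_cast hzk
        linarith
      calc ((m.choose k : ℝ) * ((n - m).choose (r - k) : ℝ)) / (n.choose r : ℝ)
          ≤ ((1 : ℝ) / 2) ^ k := step1
        _ ≤ _ := step2
    · positivity
  · have hempty : {ω | 2 * Z ω = t} = (∅ : Set Ω) := by
      ext ω; simp only [Set.mem_setOf_eq, Set.mem_empty_iff_false, iff_false]
      obtain ⟨c, hc⟩ := ho; omega
    rw [hempty]
    simp only [measure_empty, ENNReal.toReal_zero]
    positivity
end

section
/- Let Z be hypergeometric with parameters n, m, r with s ≤ m ≤ n/2 and 1 ≤ r ≤ n. Then P(2Z − r + s − m > 0) ≤ exp(−(m−s)²/(2r)). -/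
set_option maxHeartbeats 1000000

open Real

-- L1
lemma aux_L1 (x : ℝ) : 0 ≤ x * Real.exp x + 1 - Real.exp x := by
  have h := Real.add_one_le_exp (-x)
  have hx := Real.exp_pos x
  have h2 : (-x + 1) * Real.exp x ≤ Real.exp (-x) * Real.exp x :=
    mul_le_mul_of_nonneg_right h hx.le
  rw [← Real.exp_add, neg_add_cancel, Real.exp_zero] at h2
  nlinarith

-- L2 : 2(e^x - 1) ≤ x(e^x+1) for x ≥ 0
lemma aux_L2 {x : ℝ} (hx : 0 ≤ x) : 2 * (Real.exp x - 1) ≤ x * (Real.exp x + 1) := by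
  set f : ℝ → ℝ := fun x => x * Real.exp x + x - 2 * Real.exp x + 2 with hf
  have hd : ∀ y : ℝ, HasDerivAt f (y * Real.exp y + 1 - Real.exp y) y := by
    intro y
    have h1 : HasDerivAt (fun y : ℝ => y * Real.exp y) (1 * Real.exp y + y * Real.exp y) y :=
      (hasDerivAt_id y).mul (Real.hasDerivAt_exp y)
    have h2 : HasDerivAt f (1 * Real.exp y + y * Real.exp y + 1 - 2 * Real.exp y + 0) y := by
      exact (((h1.add (hasDerivAt_id y)).sub ((Real.hasDerivAt_exp y).const_mul 2)).add
        (hasDerivAt_const y 2))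
    convert h2 using 1; ring
  have hmono : MonotoneOn f (Set.Ici (0:ℝ)) := by
    apply monotoneOn_of_deriv_nonneg (convex_Ici 0)
    · exact (Continuous.continuousOn (by fun_prop))
    · intro y hy
      exact (hd y).differentiableAt.differentiableWithinAt
    · intro y hy
      rw [(hd y).deriv]
      exact aux_L1 y
  have h0 : f 0 ≤ f x := hmono (by simp) (by simpa using hx) hx
  simp only [hf] at h0
  simp at h0
  nlinarith [h0]

-- L4 : derivative bound
lemma aux_L4 {p t : ℝ} (hp0 : 0 ≤ p) (hp1 : p ≤ 1) (ht : 0 ≤ t) :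
    p * Real.exp t / (1 - p + p * Real.exp t) ≤ p + t / 4 := by
  set b := Real.exp (t / 2) with hbdef
  have hb1 : 1 ≤ b := Real.one_le_exp (by linarith)
  have hbsq : b ^ 2 = Real.exp t := by
    rw [hbdef, sq, ← Real.exp_add]
    congr 1; ring
  have hu : (1:ℝ) ≤ 1 - p + p * Real.exp t := by
    have hb2 : (1:ℝ) ≤ b ^ 2 := by nlinarith
    rw [← hbsq]; nlinarith
  have hu0 : (0:ℝ) < 1 - p + p * Real.exp t := by linarith
  -- step 1 : p e^t/u - p ≤ (b-1)/(b+1)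
  have hstep1 : p * Real.exp t / (1 - p + p * Real.exp t) - p ≤ (b - 1) / (b + 1) := by
    rw [div_sub' (ne_of_gt hu0), div_le_div_iff₀ hu0 (by linarith)]
    have key : (b - 1) * (1 - p + p * b ^ 2) - (p * b ^ 2 - p * (1 - p + p * b ^ 2)) * (b + 1)
        = (b - 1) * (1 - p * (1 + b)) ^ 2 := by ring
    nlinarith [mul_nonneg (sub_nonneg.2 hb1) (sq_nonneg (1 - p * (1 + b))), hbsq]
  -- step 2 : (b-1)/(b+1) ≤ t/4
  have hstep2 : (b - 1) / (b + 1) ≤ t / 4 := by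
    have h2 := aux_L2 (x := t / 2) (by linarith)
    rw [div_le_div_iff₀ (by linarith) (by norm_num)]
    rw [← hbdef] at h2
    nlinarith
  linarith

-- L5 : Bernoulli Hoeffding
lemma aux_L5 {p t : ℝ} (hp0 : 0 ≤ p) (hp1 : p ≤ 1) (ht : 0 ≤ t) :
    1 - p + p * Real.exp t ≤ Real.exp (p * t + t ^ 2 / 8) := by
  set G : ℝ → ℝ := fun t => p * t + t ^ 2 / 8 - Real.log (1 - p + p * Real.exp t) with hG
  have hupos : ∀ s : ℝ, 0 ≤ s → (0:ℝ) < 1 - p + p * Real.exp s := by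
    intro s hs
    have : (1:ℝ) ≤ Real.exp s := Real.one_le_exp hs
    nlinarith
  have hd : ∀ s : ℝ, 0 ≤ s →
      HasDerivAt G (p + s / 4 - p * Real.exp s / (1 - p + p * Real.exp s)) s := by
    intro s hs
    have h1 : HasDerivAt (fun s : ℝ => 1 - p + p * Real.exp s) (p * Real.exp s) s := by
      simpa using ((Real.hasDerivAt_exp s).const_mul p).const_add (1 - p)
    have h2 : HasDerivAt (fun s : ℝ => Real.log (1 - p + p * Real.exp s))
        (p * Real.exp s / (1 - p + p * Real.exp s)) s := h1.log (ne_of_gt (hupos s hs))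
    have h3 : HasDerivAt (fun s : ℝ => p * s + s ^ 2 / 8) (p + 2 * s / 8) s := by
      simpa using ((hasDerivAt_id s).const_mul p).fun_add
        (((hasDerivAt_id s).pow 2).div_const 8)
    have := h3.fun_sub h2
    refine this.congr_deriv ?_
    push_cast
    ring
  have hmono : MonotoneOn G (Set.Ici (0:ℝ)) := by
    apply monotoneOn_of_deriv_nonneg (convex_Ici 0)
    · apply ContinuousOn.sub (by fun_prop)
      apply ContinuousOn.log (by fun_prop)
      intro s hs; exact ne_of_gt (hupos s hs)
    · intro s hs
      rw [interior_Ici] at hs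
      exact (hd s (le_of_lt hs)).differentiableAt.differentiableWithinAt
    · intro s hs
      rw [interior_Ici] at hs
      rw [(hd s (le_of_lt hs)).deriv]
      have := aux_L4 hp0 hp1 (le_of_lt hs)
      linarith
  have h0 : G 0 ≤ G t := hmono (by simp) (by simpa using ht) ht
  have hG0 : G 0 = 0 := by simp [hG]
  rw [hG0, hG] at h0
  simp only [sub_nonneg] at h0
  have := Real.exp_le_exp.2 h0
  rwa [Real.exp_log (hupos t ht)] at this

open Finset

-- subset-of-subset identity, unconditional in m
lemma aux_choose_mul' (m z j : ℕ) (hjz : j ≤ z) :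
    m.choose z * z.choose j = m.choose j * (m - j).choose (z - j) := by
  rcases le_or_gt z m with h | h
  · exact Nat.choose_mul hjz
  · rw [Nat.choose_eq_zero_of_lt h, Nat.zero_mul]
    rcases le_or_gt j m with hj | hj
    · rw [Nat.choose_eq_zero_of_lt (show m - j < z - j by omega), Nat.mul_zero]
    · rw [Nat.choose_eq_zero_of_lt hj, Nat.zero_mul]

-- key sum identity
lemma aux_sum_id (n m r j : ℕ) (hmn : m ≤ n) (hjr : j ≤ r) :
    ∑ z ∈ range (r + 1), m.choose z * z.choose j * (n - m).choose (r - z)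
      = m.choose j * (n - j).choose (r - j) := by
  rcases le_or_gt j m with hjm | hjm
  · have h1 : ∑ z ∈ range (r + 1), m.choose z * z.choose j * (n - m).choose (r - z)
        = ∑ z ∈ Ico j (r + 1), m.choose z * z.choose j * (n - m).choose (r - z) := by
      rw [range_eq_Ico, ← Finset.sum_Ico_consecutive _ (Nat.zero_le j) (by omega)]
      have : ∑ z ∈ Ico 0 j, m.choose z * z.choose j * (n - m).choose (r - z) = 0 := by
        apply Finset.sum_eq_zero
        intro z hz
        rw [mem_Ico] at hz
        rw [Nat.choose_eq_zero_of_lt hz.2, Nat.mul_zero, Nat.zero_mul]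
      omega
    rw [h1, Finset.sum_Ico_eq_sum_range]
    have h2 : ∀ i ∈ range (r + 1 - j), m.choose (j + i) * (j + i).choose j *
        (n - m).choose (r - (j + i))
        = m.choose j * ((m - j).choose i * (n - m).choose (r - j - i)) := by
      intro i _
      rw [aux_choose_mul' m (j + i) j (by omega)]
      have e1 : j + i - j = i := by omega
      have e2 : r - (j + i) = r - j - i := by omega
      rw [e1, e2, Nat.mul_assoc]
    rw [Finset.sum_congr rfl h2, ← Finset.mul_sum]
    congr 1
    have h3 : r + 1 - j = (r - j) + 1 := by omega
    rw [h3]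
    have h4 := Nat.add_choose_eq (m - j) (n - m) (r - j)
    rw [Finset.Nat.sum_antidiagonal_eq_sum_range_succ (fun a b => (m - j).choose a * (n - m).choose b)] at h4
    have h5 : m - j + (n - m) = n - j := by omega
    rw [h5] at h4
    exact h4.symm
  · rw [Nat.choose_eq_zero_of_lt hjm, Nat.zero_mul]
    apply Finset.sum_eq_zero
    intro z hz
    rcases le_or_gt z m with h | h
    · rw [Nat.choose_eq_zero_of_lt (show z < j by omega)]; simp
    · rw [Nat.choose_eq_zero_of_lt h]; simp

-- descFactorial inequality
lemma aux_descFact (j : ℕ) : ∀ m n : ℕ, m ≤ n →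
    m.descFactorial j * n ^ j ≤ n.descFactorial j * m ^ j := by
  induction j with
  | zero => intro m n _; simp
  | succ j ih =>
    intro m n hmn
    rw [Nat.descFactorial_succ, Nat.descFactorial_succ, pow_succ, pow_succ]
    have h1 : (m - j) * n ≤ (n - j) * m := by
      rcases le_or_gt j m with h | h
      · rw [Nat.sub_mul, Nat.sub_mul, Nat.mul_comm n m]
        exact Nat.sub_le_sub_left (Nat.mul_le_mul_left j hmn) (m * n)
      · rw [Nat.sub_eq_zero_of_le (le_of_lt h), Nat.zero_mul]
        exact Nat.zero_le _
    calc (m - j) * m.descFactorial j * (n ^ j * n)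
        = ((m - j) * n) * (m.descFactorial j * n ^ j) := by ring
      _ ≤ ((n - j) * m) * (n.descFactorial j * m ^ j) :=
          Nat.mul_le_mul h1 (ih m n hmn)
      _ = (n - j) * n.descFactorial j * (m ^ j * m) := by ring

lemma aux_choose_pow {m n : ℕ} (j : ℕ) (hmn : m ≤ n) :
    m.choose j * n ^ j ≤ n.choose j * m ^ j := by
  have h := aux_descFact j m n hmn
  rw [Nat.descFactorial_eq_factorial_mul_choose, Nat.descFactorial_eq_factorial_mul_choose] at h
  have hfac : 0 < Nat.factorial j := Nat.factorial_pos j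
  apply Nat.le_of_mul_le_mul_left _ hfac
  calc Nat.factorial j * (m.choose j * n ^ j) = Nat.factorial j * m.choose j * n ^ j := by ring
    _ ≤ Nat.factorial j * n.choose j * m ^ j := h
    _ = Nat.factorial j * (n.choose j * m ^ j) := by ring

-- Chvátal's mgf bound
lemma aux_mgf_bound (n m r : ℕ) (hmn : m ≤ n) (hrn : r ≤ n) (hn : 0 < n)
    {y : ℝ} (hy : 1 ≤ y) :
    ∑ z ∈ range (r + 1), (m.choose z * (n - m).choose (r - z) : ℝ) * y ^ z
      ≤ (n.choose r : ℝ) * (1 + (m / n) * (y - 1)) ^ r := by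
  have hy0 : 0 ≤ y - 1 := by linarith
  have hstep1 : ∀ z ∈ range (r + 1),
      (m.choose z * (n - m).choose (r - z) : ℝ) * y ^ z
      = ∑ j ∈ range (r + 1),
          (y - 1) ^ j * ((m.choose z * z.choose j * (n - m).choose (r - z) : ℕ) : ℝ) := by
    intro z hz
    rw [mem_range] at hz
    have hpow : y ^ z = ∑ j ∈ range (r + 1), (y - 1) ^ j * (z.choose j : ℝ) := by
      have h1 : y ^ z = ((y - 1) + 1) ^ z := by norm_num
      rw [h1, add_pow]
      rw [← Finset.sum_subset (Finset.range_subset_range.2 (by omega : z + 1 ≤ r + 1))]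
      · apply Finset.sum_congr rfl
        intro j _
        rw [one_pow, mul_one]
      · intro j _ hj
        rw [mem_range, not_lt] at hj
        rw [Nat.choose_eq_zero_of_lt (by omega)]
        simp
    rw [hpow, Finset.mul_sum]
    apply Finset.sum_congr rfl
    intro j _
    push_cast
    ring
  rw [Finset.sum_congr rfl hstep1, Finset.sum_comm]
  have hstep2 : ∀ j ∈ range (r + 1),
      ∑ z ∈ range (r + 1), (y - 1) ^ j * ((m.choose z * z.choose j * (n - m).choose (r - z) : ℕ) : ℝ)
      = (y - 1) ^ j * ((m.choose j * (n - j).choose (r - j) : ℕ) : ℝ) := by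
    intro j hj
    rw [mem_range] at hj
    rw [← Finset.mul_sum, ← Nat.cast_sum, aux_sum_id n m r j hmn (by omega)]
  rw [Finset.sum_congr rfl hstep2]
  have hcoeff : ∀ j ∈ range (r + 1),
      (y - 1) ^ j * ((m.choose j * (n - j).choose (r - j) : ℕ) : ℝ)
      ≤ (n.choose r : ℝ) * ((m / n) * (y - 1)) ^ j * (r.choose j : ℝ) := by
    intro j hj
    rw [mem_range] at hj
    have hid : (n.choose j * (n - j).choose (r - j) : ℕ) = n.choose r * r.choose j :=
      (Nat.choose_mul (by omega)).symm
    have hcp : (m.choose j : ℝ) ≤ (n.choose j : ℝ) * (m / n) ^ j := by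
      have h := aux_choose_pow j hmn
      have hnp : (0:ℝ) < (n:ℝ) ^ j := by positivity
      rw [div_pow, ← mul_div_assoc, le_div_iff₀ hnp]
      exact_mod_cast h
    have hcnonneg : (0:ℝ) ≤ ((n - j).choose (r - j) : ℝ) := by positivity
    calc (y - 1) ^ j * ((m.choose j * (n - j).choose (r - j) : ℕ) : ℝ)
        = (y - 1) ^ j * ((m.choose j : ℝ) * ((n - j).choose (r - j) : ℝ)) := by push_cast; ring
      _ ≤ (y - 1) ^ j * ((n.choose j : ℝ) * (m / n) ^ j * ((n - j).choose (r - j) : ℝ)) := by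
          apply mul_le_mul_of_nonneg_left _ (by positivity)
          exact mul_le_mul_of_nonneg_right hcp hcnonneg
      _ = (((n.choose j * (n - j).choose (r - j) : ℕ) : ℝ)) * ((m / n) ^ j * (y - 1) ^ j) := by
          push_cast; ring
      _ = (((n.choose r * r.choose j : ℕ) : ℝ)) * ((m / n) ^ j * (y - 1) ^ j) := by rw [hid]
      _ = (n.choose r : ℝ) * ((m / n) * (y - 1)) ^ j * (r.choose j : ℝ) := by
          push_cast; rw [mul_pow]; ring
  calc ∑ j ∈ range (r + 1), (y - 1) ^ j * ((m.choose j * (n - j).choose (r - j) : ℕ) : ℝ)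
      ≤ ∑ j ∈ range (r + 1), (n.choose r : ℝ) * ((m / n) * (y - 1)) ^ j * (r.choose j : ℝ) :=
        Finset.sum_le_sum hcoeff
    _ = (n.choose r : ℝ) * ∑ j ∈ range (r + 1), ((m / n) * (y - 1)) ^ j * 1 ^ (r - j) * (r.choose j : ℝ) := by
        rw [Finset.mul_sum]; apply Finset.sum_congr rfl; intro j _; rw [one_pow]; ring
    _ = (n.choose r : ℝ) * ((m / n) * (y - 1) + 1) ^ r := by rw [← add_pow]
    _ = (n.choose r : ℝ) * (1 + (m / n) * (y - 1)) ^ r := by ring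

open MeasureTheory

/-- Lemma 6: let `Z` be hypergeometric with parameters `n`, `m`, `r` with
`s ≤ m ≤ n/2` and `1 ≤ r ≤ n`. Then `P(2Z − r + s − m > 0) ≤ exp(−(m−s)²/(2r))`. -/
theorem progress_positive_prob_le {Ω : Type*} [MeasurableSpace Ω]
    (μ : Measure Ω) [IsProbabilityMeasure μ]
    (n m r s : ℕ) (hsm : s ≤ m) (hm : 2 * m ≤ n) (hr1 : 1 ≤ r) (hrn : r ≤ n)
    (Z : Ω → ℕ) (hZmeas : Measurable Z)
    (hZ : ∀ z : ℕ, (μ {ω | Z ω = z}).toReal =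
      if z ≤ m ∧ z ≤ r then
        (Nat.choose m z * Nat.choose (n - m) (r - z) : ℝ) / Nat.choose n r
      else 0) :
    (μ {ω | 0 < 2 * (Z ω : ℤ) - r + s - m}).toReal
      ≤ Real.exp (-(((m : ℝ) - s) ^ 2 / (2 * r))) := by
  have hmn : m ≤ n := by omega
  have hn0 : 0 < n := by omega
  set k : ℕ := (r + (m - s)) / 2 + 1 with hk
  -- event rewrite
  have hA : {ω | 0 < 2 * (Z ω : ℤ) - r + s - m} = {ω | k ≤ Z ω} := by
    ext ω
    simp only [Set.mem_setOf_eq, hk]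
    omega
  -- vanishing beyond r
  have hzero : ∀ z : ℕ, r < z → μ {ω | Z ω = z} = 0 := by
    intro z hz
    have h1 := hZ z
    rw [if_neg (by omega)] at h1
    rcases (ENNReal.toReal_eq_zero_iff _).1 h1 with h | h
    · exact h
    · exact absurd h (measure_ne_top μ _)
  have htail0 : μ {ω | r < Z ω} = 0 := by
    have hsub : {ω | r < Z ω} ⊆ ⋃ j : ℕ, {ω | Z ω = r + 1 + j} := by
      intro ω hω
      simp only [Set.mem_setOf_eq] at hω
      exact Set.mem_iUnion.2 ⟨Z ω - r - 1, by simp only [Set.mem_setOf_eq]; omega⟩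
    refine le_antisymm ?_ (zero_le)
    calc μ {ω | r < Z ω} ≤ μ (⋃ j : ℕ, {ω | Z ω = r + 1 + j}) := measure_mono hsub
      _ ≤ ∑' j : ℕ, μ {ω | Z ω = r + 1 + j} := measure_iUnion_le _
      _ = 0 := by
          have h0 : ∀ j : ℕ, μ {ω | Z ω = r + 1 + j} = 0 := fun j => hzero _ (by omega)
          simp [h0]
  -- bound measure by finite sum
  have hsum_bound : μ {ω | k ≤ Z ω}
      ≤ ∑ z ∈ Finset.Icc k r, μ {ω | Z ω = z} := by
    have hsub : {ω | k ≤ Z ω} ⊆ (⋃ z ∈ Finset.Icc k r, {ω | Z ω = z}) ∪ {ω | r < Z ω} := by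
      intro ω hω
      simp only [Set.mem_setOf_eq] at hω
      rcases le_or_gt (Z ω) r with h | h
      · left
        exact Set.mem_biUnion (Finset.mem_Icc.2 ⟨hω, h⟩) rfl
      · right; exact h
    calc μ {ω | k ≤ Z ω} ≤ μ ((⋃ z ∈ Finset.Icc k r, {ω | Z ω = z}) ∪ {ω | r < Z ω}) :=
          measure_mono hsub
      _ ≤ μ (⋃ z ∈ Finset.Icc k r, {ω | Z ω = z}) + μ {ω | r < Z ω} := measure_union_le _ _
      _ = μ (⋃ z ∈ Finset.Icc k r, {ω | Z ω = z}) := by rw [htail0, add_zero]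
      _ ≤ ∑ z ∈ Finset.Icc k r, μ {ω | Z ω = z} := measure_biUnion_finset_le _ _
  have htoReal : (μ {ω | k ≤ Z ω}).toReal ≤ ∑ z ∈ Finset.Icc k r, (μ {ω | Z ω = z}).toReal := by
    have hne : ∀ z ∈ Finset.Icc k r, μ {ω | Z ω = z} ≠ ⊤ := fun z _ => measure_ne_top μ _
    calc (μ {ω | k ≤ Z ω}).toReal ≤ (∑ z ∈ Finset.Icc k r, μ {ω | Z ω = z}).toReal :=
          ENNReal.toReal_mono (ENNReal.sum_ne_top.2 hne) hsum_bound
      _ = ∑ z ∈ Finset.Icc k r, (μ {ω | Z ω = z}).toReal := ENNReal.toReal_sum hne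
  -- pmf formula valid for all z ≤ r
  have hC0 : (0:ℝ) < (n.choose r : ℝ) := by exact_mod_cast Nat.choose_pos hrn
  have hpmf : ∀ z : ℕ, z ≤ r → (μ {ω | Z ω = z}).toReal
      = (m.choose z * (n - m).choose (r - z) : ℝ) / (n.choose r : ℝ) := by
    intro z hz
    rw [hZ z]
    rcases le_or_gt z m with h | h
    · rw [if_pos ⟨h, hz⟩]
    · rw [if_neg (by omega), Nat.choose_eq_zero_of_lt h]
      simp
  -- real parameters
  set p : ℝ := (m : ℝ) / n with hpdef
  have hp0 : 0 ≤ p := by positivity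
  have hp2 : p ≤ 1 / 2 := by
    rw [hpdef, div_le_div_iff₀ (by exact_mod_cast hn0) (by norm_num)]
    have : (2:ℝ) * m ≤ n := by exact_mod_cast hm
    linarith
  have hp1 : p ≤ 1 := by linarith
  have hr0 : (0:ℝ) < r := by exact_mod_cast hr1
  have hd0 : (0:ℝ) ≤ (m:ℝ) - s := by
    have : (s:ℝ) ≤ m := by exact_mod_cast hsm
    linarith
  have hkge : (r:ℝ) / 2 + ((m:ℝ) - s) / 2 ≤ (k:ℝ) := by
    have h1 : r + (m - s) ≤ 2 * k := by omega
    have h2 := (Nat.cast_le (α := ℝ)).2 h1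
    rw [Nat.cast_add, Nat.cast_sub hsm, Nat.cast_mul, Nat.cast_ofNat] at h2
    linarith
  set Δ : ℝ := (k:ℝ) - r * p with hΔdef
  have hΔ : ((m:ℝ) - s) / 2 ≤ Δ := by
    have hrp : (r:ℝ) * p ≤ r / 2 := by nlinarith
    rw [hΔdef]; linarith
  have hΔ0 : 0 ≤ Δ := by linarith
  set t : ℝ := 4 * Δ / r with htdef
  have ht0 : 0 ≤ t := by positivity
  set y : ℝ := Real.exp t with hydef
  have hy1 : 1 ≤ y := Real.one_le_exp ht0
  have hyk : (0:ℝ) < y ^ k := by positivity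
  -- Step A
  have hstepA : ∑ z ∈ Finset.Icc k r, (μ {ω | Z ω = z}).toReal
      ≤ (y ^ k)⁻¹ * ∑ z ∈ Finset.range (r + 1),
          ((m.choose z * (n - m).choose (r - z) : ℝ) / (n.choose r : ℝ)) * y ^ z := by
    have hterm : ∀ z ∈ Finset.Icc k r, (μ {ω | Z ω = z}).toReal
        ≤ (y ^ k)⁻¹ * (((m.choose z * (n - m).choose (r - z) : ℝ) / (n.choose r : ℝ)) * y ^ z) := by
      intro z hz
      rw [Finset.mem_Icc] at hz
      rw [hpmf z hz.2]
      have hw0 : (0:ℝ) ≤ (m.choose z * (n - m).choose (r - z) : ℝ) / (n.choose r : ℝ) := by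
        positivity
      have hpow : y ^ k ≤ y ^ z := pow_le_pow_right₀ hy1 hz.1
      calc (m.choose z * (n - m).choose (r - z) : ℝ) / (n.choose r : ℝ)
          = (y ^ k)⁻¹ * (((m.choose z * (n - m).choose (r - z) : ℝ) / (n.choose r : ℝ)) * y ^ k) := by
            field_simp
        _ ≤ (y ^ k)⁻¹ * (((m.choose z * (n - m).choose (r - z) : ℝ) / (n.choose r : ℝ)) * y ^ z) := by
            apply mul_le_mul_of_nonneg_left _ (inv_nonneg.2 hyk.le)
            exact mul_le_mul_of_nonneg_left hpow hw0
    calc ∑ z ∈ Finset.Icc k r, (μ {ω | Z ω = z}).toReal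
        ≤ ∑ z ∈ Finset.Icc k r, (y ^ k)⁻¹ *
            (((m.choose z * (n - m).choose (r - z) : ℝ) / (n.choose r : ℝ)) * y ^ z) :=
          Finset.sum_le_sum hterm
      _ ≤ ∑ z ∈ Finset.range (r + 1), (y ^ k)⁻¹ *
            (((m.choose z * (n - m).choose (r - z) : ℝ) / (n.choose r : ℝ)) * y ^ z) := by
          apply Finset.sum_le_sum_of_subset_of_nonneg
          · intro z hz
            rw [Finset.mem_Icc] at hz
            rw [Finset.mem_range]
            omega
          · intro z _ _
            positivity
      _ = (y ^ k)⁻¹ * ∑ z ∈ Finset.range (r + 1),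
            ((m.choose z * (n - m).choose (r - z) : ℝ) / (n.choose r : ℝ)) * y ^ z := by
          rw [Finset.mul_sum]
  -- Step B
  have hstepB : ∑ z ∈ Finset.range (r + 1),
      ((m.choose z * (n - m).choose (r - z) : ℝ) / (n.choose r : ℝ)) * y ^ z
      ≤ (1 + p * (y - 1)) ^ r := by
    have h := aux_mgf_bound n m r hmn hrn hn0 hy1
    calc ∑ z ∈ Finset.range (r + 1),
        ((m.choose z * (n - m).choose (r - z) : ℝ) / (n.choose r : ℝ)) * y ^ z
        = (∑ z ∈ Finset.range (r + 1),
            (m.choose z * (n - m).choose (r - z) : ℝ) * y ^ z) / (n.choose r : ℝ) := by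
          rw [Finset.sum_div]
          apply Finset.sum_congr rfl
          intro z _
          ring
      _ ≤ ((n.choose r : ℝ) * (1 + p * (y - 1)) ^ r) / (n.choose r : ℝ) := by gcongr
      _ = (1 + p * (y - 1)) ^ r := by field_simp
  -- Step C
  have hbase0 : (0:ℝ) ≤ 1 + p * (y - 1) := by nlinarith
  have hstepC : (1 + p * (y - 1)) ^ r ≤ Real.exp (p * t + t ^ 2 / 8) ^ r := by
    apply pow_le_pow_left₀ hbase0
    have := aux_L5 hp0 hp1 ht0
    rw [hydef]
    linarith
  -- Step D
  have hstepD : (y ^ k)⁻¹ * Real.exp (p * t + t ^ 2 / 8) ^ r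
      = Real.exp ((r:ℝ) * (p * t + t ^ 2 / 8) - k * t) := by
    rw [hydef, ← Real.exp_nat_mul, ← Real.exp_nat_mul, ← Real.exp_neg, ← Real.exp_add]
    congr 1
    ring
  -- Step E
  have hstepE : (r:ℝ) * (p * t + t ^ 2 / 8) - k * t ≤ -(((m:ℝ) - s) ^ 2 / (2 * r)) := by
    have hL : (r:ℝ) * (p * t + t ^ 2 / 8) - k * t = -(2 * Δ ^ 2 / r) := by
      rw [htdef, hΔdef]
      field_simp
      ring
    rw [hL]
    have h4 : ((m:ℝ) - s) ^ 2 ≤ 4 * Δ ^ 2 := by nlinarith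
    rw [neg_le_neg_iff, div_le_div_iff₀ (by positivity) (by positivity)]
    nlinarith [mul_le_mul_of_nonneg_right h4 hr0.le]
  -- assemble
  calc (μ {ω | 0 < 2 * (Z ω : ℤ) - r + s - m}).toReal
      = (μ {ω | k ≤ Z ω}).toReal := by rw [hA]
    _ ≤ ∑ z ∈ Finset.Icc k r, (μ {ω | Z ω = z}).toReal := htoReal
    _ ≤ (y ^ k)⁻¹ * ∑ z ∈ Finset.range (r + 1),
          ((m.choose z * (n - m).choose (r - z) : ℝ) / (n.choose r : ℝ)) * y ^ z := hstepA
    _ ≤ (y ^ k)⁻¹ * (1 + p * (y - 1)) ^ r := by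
        exact mul_le_mul_of_nonneg_left hstepB (inv_nonneg.2 hyk.le)
    _ ≤ (y ^ k)⁻¹ * Real.exp (p * t + t ^ 2 / 8) ^ r :=
        mul_le_mul_of_nonneg_left hstepC (inv_nonneg.2 hyk.le)
    _ = Real.exp ((r:ℝ) * (p * t + t ^ 2 / 8) - k * t) := hstepD
    _ ≤ Real.exp (-(((m:ℝ) - s) ^ 2 / (2 * r))) := Real.exp_le_exp.2 hstepE
end

section
/- Additive drift upper bound: let (X_t) be a stochastic process on {0} ∪ [x_min, x_max] adapted to a filtration with x_min > 0, g as above, and suppose E[g(X_t) − g(X_{t+1}) | F_t, X_t ≥ x_min] ≥ α for some α > 0. Then E[T_0 | X_0] ≤ g(X_0)/α, where T_0 = min{t : X_t = 0}. -/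
open MeasureTheory

/-- Additive drift upper bound (part (i) of the general drift theorem of Lehre and
Witt): if `E[g(X_t) − g(X_{t+1}) | F_t] ≥ α` whenever `X_t ≥ x_min`, then the
hitting time `T_0 = min{t : X_t = 0}` satisfies `E[T_0 | X_0 = x0] ≤ g(x0)/α`. -/
theorem additive_drift_upper_bound {Ω : Type*} {m0 : MeasurableSpace Ω}
    (μ : Measure Ω) [IsProbabilityMeasure μ]
    (F : Filtration ℕ m0)
    (xmin xmax : ℝ) (hxmin : 0 < xmin)
    (X : ℕ → Ω → ℝ) (hadapted : Adapted F X)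
    (hstate : ∀ t ω, X t ω = 0 ∨ X t ω ∈ Set.Icc xmin xmax)
    (g : ℝ → ℝ) (hg0 : g 0 = 0) (hgpos : ∀ x ∈ Set.Icc xmin xmax, 0 < g x)
    (α : ℝ) (hα : 0 < α)
    (hdrift : ∀ t, ∀ᵐ ω ∂μ, xmin ≤ X t ω →
      α ≤ (μ[fun ω' => g (X t ω') - g (X (t + 1) ω') | F t]) ω)
    (x0 : ℝ) (hX0 : ∀ ω, X 0 ω = x0) :
    ∫⁻ ω, (⨅ t ∈ {t : ℕ | X t ω = 0}, (t : ENNReal)) ∂μ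
      ≤ ENNReal.ofReal (g x0 / α) := by
  classical
  -- nonnegativity of g on states
  have hgX : ∀ t ω, 0 ≤ g (X t ω) := by
    intro t ω
    rcases hstate t ω with h | h
    · rw [h, hg0]
    · exact (hgpos _ h).le
  -- B t : the event that X has not hit 0 up to time t
  set B : ℕ → Set Ω := fun t => {ω | ∀ s ≤ t, X s ω ≠ 0} with hB
  have hBmeasF : ∀ t, MeasurableSet[F t] (B t) := by
    intro t
    have : B t = ⋂ (s : ℕ) (_ : s ≤ t), {ω | X s ω ≠ 0} := by
      ext ω; simp [hB]
    rw [this]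
    refine MeasurableSet.iInter fun s => MeasurableSet.iInter fun hs => ?_
    have hXs : Measurable[F s] (X s) := hadapted s
    exact F.mono hs _ ((hXs (measurableSet_singleton 0)).compl)
  have hBmeas : ∀ t, MeasurableSet (B t) := fun t => F.le t _ (hBmeasF t)
  have hBsub : ∀ t ω, ω ∈ B t → xmin ≤ X t ω := by
    intro t ω hω
    rcases hstate t ω with h | h
    · exact absurd h (hω t le_rfl)
    · exact h.1
  -- the truncated potential Y
  set Y : ℕ → Ω → ℝ := fun t =>
    Set.indicator {ω | ∀ s < t, X s ω ≠ 0} (fun ω => g (X t ω)) with hY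
  have hY0 : Y 0 = fun _ => g x0 := by
    funext ω
    simp [hY, Set.indicator_of_mem, Set.mem_setOf_eq, hX0 ω]
  have hYnonneg : ∀ t ω, 0 ≤ Y t ω := by
    intro t ω
    by_cases h : ω ∈ {ω | ∀ s < t, X s ω ≠ 0}
    · rw [hY]; simpa [Set.indicator_of_mem h] using hgX t ω
    · rw [hY]; simp [Set.indicator_of_notMem h]
  -- key pointwise identity
  have hkey : ∀ t ω, Y t ω - Y (t + 1) ω
      = (B t).indicator (fun ω => g (X t ω) - g (X (t + 1) ω)) ω := by
    intro t ω
    by_cases h : ω ∈ B t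
    · have h1 : ω ∈ {ω | ∀ s < t, X s ω ≠ 0} := fun s hs => h s hs.le
      have h2 : ω ∈ {ω | ∀ s < t + 1, X s ω ≠ 0} := fun s hs =>
        h s (Nat.lt_succ_iff.mp hs)
      rw [hY]
      simp [Set.indicator_of_mem h, Set.indicator_of_mem h1, Set.indicator_of_mem h2]
      exact fun x hx h0 => absurd h0 (h x hx)
    · rw [Set.indicator_of_notMem h]
      have h2 : ω ∉ {ω | ∀ s < t + 1, X s ω ≠ 0} := by
        intro h2
        exact h fun s hs => h2 s (Nat.lt_succ_iff.mpr hs)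
      by_cases h1 : ω ∈ {ω | ∀ s < t, X s ω ≠ 0}
      · have hXt : X t ω = 0 := by
          by_contra hXt
          exact h fun s hs => (Nat.lt_succ_iff_lt_or_eq.mp (Nat.lt_succ_iff.mpr hs)).elim
            (h1 s) (fun he => he ▸ hXt)
        rw [hY]
        simp [Set.indicator_of_mem h1, Set.indicator_of_notMem h2, hXt, hg0]
        exact fun h' => absurd h' h
      · rw [hY]
        simp [Set.indicator_of_notMem h1, Set.indicator_of_notMem h2]
        exact fun h' => absurd h' h
  -- per-step estimate
  have hstep : ∀ t, Integrable ((B t).indicator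
        (fun ω => g (X t ω) - g (X (t + 1) ω))) μ ∧
      α * (μ (B t)).toReal ≤ ∫ ω, (B t).indicator
        (fun ω => g (X t ω) - g (X (t + 1) ω)) ω ∂μ := by
    intro t
    set f : Ω → ℝ := fun ω => g (X t ω) - g (X (t + 1) ω) with hf
    by_cases hInt : Integrable f μ
    · constructor
      · exact hInt.indicator (hBmeas t)
      · have h1 : ∫ ω, (B t).indicator f ω ∂μ = ∫ ω in B t, f ω ∂μ :=
          integral_indicator (hBmeas t)
        rw [h1, ← setIntegral_condExp (F.le t) hInt (hBmeasF t)]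
        have hae : ∀ᵐ ω ∂μ.restrict (B t), α ≤ (μ[f|F t]) ω := by
          filter_upwards [ae_restrict_of_ae (hdrift t), ae_restrict_mem (hBmeas t)]
            with ω ha hb
          exact ha (hBsub t ω hb)
        calc α * (μ (B t)).toReal = ∫ _ω in B t, α ∂μ := by
              rw [setIntegral_const, smul_eq_mul, mul_comm]
              rfl
          _ ≤ ∫ ω in B t, (μ[f|F t]) ω ∂μ :=
              integral_mono_ae (integrable_const α)
                integrable_condExp.integrableOn hae
    · have hcond : μ[f|F t] = 0 := condExp_of_not_integrable hInt
      have hB0 : ∀ᵐ ω ∂μ, ω ∉ B t := by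
        filter_upwards [hdrift t] with ω h hω
        have := h (hBsub t ω hω)
        rw [hcond] at this
        simp only [Pi.zero_apply] at this
        linarith
      have hμB : μ (B t) = 0 := by
        exact measure_eq_zero_iff_ae_notMem.mpr hB0
      have hzero : (B t).indicator f =ᵐ[μ] 0 := by
        filter_upwards [hB0] with ω hω
        simp [Set.indicator_of_notMem hω]
      constructor
      · exact (integrable_zero _ _ _).congr hzero.symm
      · rw [integral_congr_ae hzero, hμB]
        simp
  -- main induction
  have hmain : ∀ n, Integrable (Y n) μ ∧
      ∫ ω, Y n ω ∂μ + α * ∑ s ∈ Finset.range n, (μ (B s)).toReal ≤ g x0 := by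
    intro n
    induction n with
    | zero =>
        rw [hY0]
        constructor
        · exact integrable_const _
        · simp
    | succ n ih =>
        obtain ⟨hI, hE⟩ := ih
        have hYsucc : Y (n + 1) = fun ω => Y n ω -
            (B n).indicator (fun ω => g (X n ω) - g (X (n + 1) ω)) ω := by
          funext ω
          have := hkey n ω
          linarith
        obtain ⟨hIi, hEi⟩ := hstep n
        constructor
        · rw [hYsucc]; exact hI.sub hIi
        · have : ∫ ω, Y (n + 1) ω ∂μ = ∫ ω, Y n ω ∂μ -
              ∫ ω, (B n).indicator (fun ω => g (X n ω) - g (X (n + 1) ω)) ω ∂μ := by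
            rw [hYsucc]; exact integral_sub hI hIi
          rw [this, Finset.sum_range_succ]
          have h2 : α * (∑ s ∈ Finset.range n, (μ (B s)).toReal + (μ (B n)).toReal)
              = α * ∑ s ∈ Finset.range n, (μ (B s)).toReal + α * (μ (B n)).toReal := by
            ring
          linarith
  -- nonnegativity gives partial-sum bound
  have hgx0 : 0 ≤ g x0 := by
    obtain ⟨ω, -⟩ := MeasureTheory.nonempty_of_measure_ne_zero
      (show μ Set.univ ≠ 0 by simp)
    have := hgX 0 ω
    rwa [hX0 ω] at this
  have hsum : ∀ n, ∑ s ∈ Finset.range n, (μ (B s)).toReal ≤ g x0 / α := by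
    intro n
    obtain ⟨hI, hE⟩ := hmain n
    have h0 : 0 ≤ ∫ ω, Y n ω ∂μ := integral_nonneg (hYnonneg n)
    rw [le_div_iff₀ hα]
    nlinarith
  -- tsum bound in ENNReal
  have htsum : ∑' t, μ (B t) ≤ ENNReal.ofReal (g x0 / α) := by
    refine Summable.tsum_le_of_sum_range_le ENNReal.summable fun n => ?_
    have hne : ∑ s ∈ Finset.range n, μ (B s) ≠ ⊤ :=
      (ENNReal.sum_lt_top.mpr fun s _ => measure_lt_top μ (B s)).ne
    rw [ENNReal.le_ofReal_iff_toReal_le hne (div_nonneg hgx0 hα.le),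
      ENNReal.toReal_sum fun s _ => (measure_lt_top μ (B s)).ne]
    exact hsum n
  -- pointwise bound on the hitting time
  have hpoint : ∀ ω, (⨅ t ∈ {t : ℕ | X t ω = 0}, (t : ENNReal))
      ≤ ∑' t, (B t).indicator (1 : Ω → ENNReal) ω := by
    intro ω
    by_cases hS : {t : ℕ | X t ω = 0}.Nonempty
    · set N := sInf {t : ℕ | X t ω = 0} with hNdef
      have hN : N ∈ {t : ℕ | X t ω = 0} := Nat.sInf_mem hS
      refine le_trans (iInf₂_le N hN) ?_
      have hmem : ∀ t < N, (B t).indicator (1 : Ω → ENNReal) ω = 1 := by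
        intro t ht
        have : ω ∈ B t := fun s hs h0 =>
          Nat.notMem_of_lt_sInf (lt_of_le_of_lt hs ht) h0
        simp [Set.indicator_of_mem this]
      calc (N : ENNReal) = ∑ t ∈ Finset.range N, 1 := by simp
        _ = ∑ t ∈ Finset.range N, (B t).indicator (1 : Ω → ENNReal) ω :=
            Finset.sum_congr rfl fun t ht =>
              (hmem t (Finset.mem_range.mp ht)).symm
        _ ≤ ∑' t, (B t).indicator (1 : Ω → ENNReal) ω :=
            ENNReal.sum_le_tsum _
    · have hmem : ∀ t, (B t).indicator (1 : Ω → ENNReal) ω = 1 := by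
        intro t
        have : ω ∈ B t := fun s _ h0 => hS ⟨s, h0⟩
        simp [Set.indicator_of_mem this]
      have : ∑' t, (B t).indicator (1 : Ω → ENNReal) ω = ⊤ := by
        rw [tsum_congr hmem]
        exact ENNReal.tsum_const_eq_top_of_ne_zero one_ne_zero
      rw [this]
      exact le_top
  calc ∫⁻ ω, (⨅ t ∈ {t : ℕ | X t ω = 0}, (t : ENNReal)) ∂μ
      ≤ ∫⁻ ω, ∑' t, (B t).indicator (1 : Ω → ENNReal) ω ∂μ :=
        lintegral_mono hpoint
    _ = ∑' t, ∫⁻ ω, (B t).indicator (1 : Ω → ENNReal) ω ∂μ :=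
        lintegral_tsum fun t => (measurable_one.indicator (hBmeas t)).aemeasurable
    _ = ∑' t, μ (B t) := tsum_congr fun t => lintegral_indicator_one (hBmeas t)
    _ ≤ ENNReal.ofReal (g x0 / α) := htsum
end
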